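/- Let k ≥ 2 and suppose nonnegative integers n ≥ m ≥ l ≥ 0, d ≥ 2, 1 ≤ a ≤ 9 satisfy L_n^{(k)} · L_m^{(k)} · L_l^{(k)} = a·(10^d − 1)/9, and assume n > 25. Then (a/9)·10^d ≠ f_k(α)^2 · (2α − 1)^2 · α^{n+m−2} · L_l^{(k)}, where α is the dominant root of x^k − x^{k−1} − ⋯ − x − 1. (Equivalently, the linear form Λ_2 = α^{−(n+m−2)}·10^d·f_k(α)^{−2}(2α−1)^{−2}·(L_l^{(k)})^{−1}·(a/9) − 1 is nonzero.) -/

import Mathlib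

/-- The `k`-generalized Lucas sequence: `L 0 = 2`, `L 1 = 1`, and for `n ≥ 2`,
`L n = L (n-1) + L (n-2) + ⋯ + L (n-k)`, where terms with negative index count as `0`. -/
def lucasK (k : ℕ) : ℕ → ℕ
  | 0 => 2
  | 1 => 1
  | n + 2 => ∑ j ∈ Finset.range k, if _ : j ≤ n + 1 then lucasK k (n + 1 - j) else 0
termination_by n => n
decreasing_by omega

lemma lucasK_two (k : ℕ) (hk : 2 ≤ k) : lucasK k 2 = 3 := by
  rw [lucasK]
  rw [← Finset.sum_subset (Finset.range_subset_range.2 hk)]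
  · simp [Finset.sum_range_succ, lucasK]
  · intro x _ hx
    simp at hx
    rw [dif_neg]
    omega

lemma lucasK_succ_le (k : ℕ) (hk : 2 ≤ k) (n : ℕ) : lucasK k (n+1) ≤ lucasK k (n+2) := by
  conv_rhs => rw [lucasK]
  calc lucasK k (n+1) = (if _ : (0:ℕ) ≤ n + 1 then lucasK k (n + 1 - 0) else 0) := by simp
  _ ≤ _ := Finset.single_le_sum (f := fun j => if _ : j ≤ n + 1 then lucasK k (n + 1 - j) else 0)
      (fun i _ => by positivity) (Finset.mem_range.2 (by omega))

lemma lucasK_pos (k : ℕ) (hk : 2 ≤ k) : ∀ n, 1 ≤ lucasK k n := by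
  intro n
  induction n using Nat.strong_induction_on with
  | _ n ih =>
    match n with
    | 0 => simp [lucasK]
    | 1 => simp [lucasK]
    | (n+2) => exact le_trans (ih (n+1) (by omega)) (lucasK_succ_le k hk n)

lemma lucasK_mono (k : ℕ) (hk : 2 ≤ k) {i j : ℕ} (hi : 1 ≤ i) (hij : i ≤ j) :
    lucasK k i ≤ lucasK k j := by
  induction j with
  | zero => omega
  | succ j ih =>
    rcases Nat.lt_or_ge i (j+1) with h | h
    · have hj : 1 ≤ j := by omega
      refine le_trans (ih (by omega)) ?_
      obtain ⟨j', rfl⟩ : ∃ j', j = j' + 1 := ⟨j - 1, by omega⟩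
      exact lucasK_succ_le k hk j'
    · have : i = j + 1 := by omega
      subst this; exact le_rfl

lemma lucasK_fib (k : ℕ) (hk : 2 ≤ k) (n : ℕ) :
    lucasK k (n+1) + lucasK k n ≤ lucasK k (n+2) := by
  conv_rhs => rw [lucasK]
  have hsub : ({0, 1} : Finset ℕ) ⊆ Finset.range k := by
    intro x hx; simp at hx; rcases hx with rfl | rfl <;> simp <;> omega
  calc lucasK k (n+1) + lucasK k n
      = ∑ j ∈ ({0,1} : Finset ℕ), (if _ : j ≤ n + 1 then lucasK k (n + 1 - j) else 0) := by
        rw [Finset.sum_insert (by simp), Finset.sum_singleton]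
        simp
    _ ≤ _ := Finset.sum_le_sum_of_subset_of_nonneg hsub (fun i _ _ => by positivity)

lemma lucasK_double (k : ℕ) (hk : 2 ≤ k) (n : ℕ) (hn : 1 ≤ n) :
    2 * lucasK k n ≤ lucasK k (n+2) := by
  have h1 := lucasK_fib k hk n
  have h2 := lucasK_mono k hk hn (by omega : n ≤ n+1)
  omega

lemma lucasK_lb (k : ℕ) (hk : 2 ≤ k) : 12288 ≤ lucasK k 26 := by
  have l2 : lucasK k 2 = 3 := lucasK_two k hk
  have step : ∀ i, 1 ≤ i → ∀ c, c ≤ lucasK k i → 2*c ≤ lucasK k (i+2) := by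
    intro i hi c hc
    calc 2*c ≤ 2 * lucasK k i := by omega
    _ ≤ _ := lucasK_double k hk i hi
  have h4 : 6 ≤ lucasK k 4 := by simpa using step 2 (by omega) 3 l2.ge
  have h6 := step 4 (by omega) 6 h4
  have h8 := step 6 (by omega) 12 h6
  have h10 := step 8 (by omega) 24 h8
  have h12 := step 10 (by omega) 48 h10
  have h14 := step 12 (by omega) 96 h12
  have h16 := step 14 (by omega) 192 h14
  have h18 := step 16 (by omega) 384 h16
  have h20 := step 18 (by omega) 768 h18
  have h22 := step 20 (by omega) 1536 h20
  have h24 := step 22 (by omega) 3072 h22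
  have h26 := step 24 (by omega) 6144 h24
  simpa using h26

lemma key_nat (k n m l d a : ℕ) (hk : 2 ≤ k) (hnm : m ≤ n) (hml : l ≤ m)
    (ha1 : 1 ≤ a) (ha9 : a ≤ 9) (hd : 2 ≤ d)
    (heq : lucasK k n * lucasK k m * lucasK k l = a * ((10 ^ d - 1) / 9))
    (hn : 25 < n) :
    5 ≤ d ∧ 324 * lucasK k l < 10 ^ d := by
  have hmod : 10 ^ d % 9 = 1 := by
    rw [Nat.pow_mod]; simp
  have hpow1 : 1 ≤ 10 ^ d := Nat.one_le_pow _ _ (by omega)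
  have h9 : 9 ∣ 10 ^ d - 1 := by omega
  have hR : 9 * ((10 ^ d - 1) / 9) = 10 ^ d - 1 := Nat.mul_div_cancel' h9
  have hub : lucasK k n * lucasK k m * lucasK k l ≤ 10 ^ d - 1 := by
    rw [heq]
    calc a * ((10 ^ d - 1) / 9) ≤ 9 * ((10 ^ d - 1) / 9) :=
      Nat.mul_le_mul_right _ ha9
    _ = 10 ^ d - 1 := hR
  have hLn : 12288 ≤ lucasK k n :=
    le_trans (lucasK_lb k hk) (lucasK_mono k hk (by omega) (by omega))
  have hLm1 : 1 ≤ lucasK k m := lucasK_pos k hk m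
  have hLl1 : 1 ≤ lucasK k l := lucasK_pos k hk l
  have hprodLn : lucasK k n ≤ lucasK k n * lucasK k m * lucasK k l := by
    calc lucasK k n = lucasK k n * 1 * 1 := by ring
    _ ≤ _ := by
        apply Nat.mul_le_mul (Nat.mul_le_mul le_rfl hLm1) hLl1
  have hd5 : 5 ≤ d := by
    by_contra hcon
    have hdle : d ≤ 4 := by omega
    have : 10 ^ d ≤ 10 ^ 4 := Nat.pow_le_pow_right (by omega) hdle
    norm_num at this
    omega
  refine ⟨hd5, ?_⟩
  have hl2 : ∀ j, l ≤ j → lucasK k l ≤ 2 * lucasK k j := by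
    intro j hj
    rcases Nat.eq_zero_or_pos l with rfl | hl
    · have : lucasK k 0 = 2 := by rw [lucasK]
      rw [this]; have := lucasK_pos k hk j; omega
    · have := lucasK_mono k hk hl hj
      omega
  have hl2m := hl2 m hml
  have hl2n := hl2 n (le_trans hml hnm)
  have hcube : lucasK k l ^ 3 ≤ 4 * (10 ^ d - 1) := by
    calc lucasK k l ^ 3 = lucasK k l * lucasK k l * lucasK k l := by ring
    _ ≤ (2 * lucasK k n) * (2 * lucasK k m) * lucasK k l := by
        exact Nat.mul_le_mul (Nat.mul_le_mul hl2n hl2m) le_rfl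
    _ = 4 * (lucasK k n * lucasK k m * lucasK k l) := by ring
    _ ≤ 4 * (10 ^ d - 1) := Nat.mul_le_mul_left _ hub
  by_contra hcon
  push_neg at hcon
  have h1 : (10 ^ d) ^ 3 ≤ 324 ^ 3 * lucasK k l ^ 3 := by
    calc (10 ^ d) ^ 3 ≤ (324 * lucasK k l) ^ 3 := Nat.pow_le_pow_left hcon 3
    _ = 324 ^ 3 * lucasK k l ^ 3 := by ring
  have h2 : (10 ^ d) ^ 3 ≤ 136048896 * (10 ^ d) := by
    calc (10 ^ d) ^ 3 ≤ 324 ^ 3 * (4 * (10 ^ d - 1)) := by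
          refine le_trans h1 (Nat.mul_le_mul_left _ hcube)
    _ ≤ 136048896 * (10 ^ d) := by
          have : 324 ^ 3 * 4 = 136048896 := by norm_num
          calc 324 ^ 3 * (4 * (10 ^ d - 1)) = 136048896 * (10 ^ d - 1) := by ring
          _ ≤ _ := Nat.mul_le_mul_left _ (by omega)
  have h3 : (10 ^ d) ^ 2 ≤ 136048896 := by
    have hpos : 0 < 10 ^ d := by omega
    have : (10 ^ d) ^ 2 * 10 ^ d ≤ 136048896 * 10 ^ d := by
      calc (10 ^ d) ^ 2 * 10 ^ d = (10 ^ d) ^ 3 := by ring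
      _ ≤ _ := h2
    exact Nat.le_of_mul_le_mul_right this hpos
  have h4 : 10 ^ 5 ≤ 10 ^ d := Nat.pow_le_pow_right (by omega) hd5
  have h5 : (10 ^ 5 : ℕ) ^ 2 ≤ (10 ^ d) ^ 2 := Nat.pow_le_pow_left h4 2
  norm_num at h5
  omega

section
variable {k : ℕ} {α : ℝ}

lemma two_pow_neg_le (hk : 2 ≤ k) : (2:ℝ) ^ (-(k : ℤ)) ≤ 1/((k:ℝ)+1) := by
  have h2k : (k:ℝ) + 1 ≤ 2 ^ k := by exact_mod_cast Nat.lt_two_pow_self (n := k)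
  rw [zpow_neg, zpow_natCast, one_div]
  exact inv_anti₀ (by positivity) h2k

lemma alpha_gt32 (hk : 2 ≤ k) (hα₁ : 2 * (1 - (2 : ℝ) ^ (-(k : ℤ))) < α) : (3:ℝ)/2 < α := by
  have h1 : (2:ℝ) ^ (-(k : ℤ)) ≤ 1/4 := by
    rw [zpow_neg, zpow_natCast, show (1:ℝ)/4 = ((4:ℝ))⁻¹ by norm_num]
    refine inv_anti₀ (by norm_num) ?_
    calc (4:ℝ) = 2^2 := by norm_num
    _ ≤ 2^k := by exact pow_le_pow_right₀ (by norm_num) hk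
  nlinarith

lemma alpha_cubic (hroot : α ^ k = ∑ i ∈ Finset.range k, α ^ i) :
    α ^ (k+1) - 2 * α ^ k + 1 = 0 := by
  have h := geom_sum_mul α k
  rw [← hroot] at h
  linear_combination h

lemma alpha_gt_crit (hk : 2 ≤ k) (hα₁ : 2 * (1 - (2 : ℝ) ^ (-(k : ℤ))) < α) :
    2 * k / ((k:ℝ) + 1) < α := by
  have h1 := two_pow_neg_le (k := k) hk
  have hk1 : (0:ℝ) < (k:ℝ) + 1 := by positivity
  have heq : 2 * (k:ℝ) / ((k:ℝ)+1) = 2 - 2/((k:ℝ)+1) := by field_simp; ring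
  have h2 : 2 * (2:ℝ) ^ (-(k : ℤ)) ≤ 2/((k:ℝ)+1) := by
    rw [show (2:ℝ)/((k:ℝ)+1) = 2*(1/((k:ℝ)+1)) by ring]
    linarith
  rw [heq]
  linarith
end

section
variable {k : ℕ} {α : ℝ}

lemma hfun_deriv (hk : 2 ≤ k) (x : ℝ) :
    HasDerivAt (fun x:ℝ => x^(k+1) - 2*x^k + 1)
      (x^(k-1) * (((k:ℝ)+1)*x - 2*k)) x := by
  have h1 : HasDerivAt (fun x:ℝ => x^(k+1)) (((k:ℝ)+1) * x^k) x := by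
    have := hasDerivAt_pow (k+1) x
    simpa using this
  have h2 : HasDerivAt (fun x:ℝ => 2*x^k) (2*((k:ℝ) * x^(k-1))) x := by
    exact (hasDerivAt_pow k x).const_mul 2
  have h := (h1.sub h2).add_const 1
  refine h.congr_deriv ?_
  have hx : x^k = x^(k-1)*x := by
    rw [← pow_succ]; congr 1; omega
  rw [hx]; ring

lemma hfun_anti (hk : 2 ≤ k) :
    StrictAntiOn (fun x:ℝ => x^(k+1) - 2*x^k + 1) (Set.Icc 1 (2*k/((k:ℝ)+1))) := by
  have hc : (1:ℝ) < 2*k/((k:ℝ)+1) := by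
    rw [lt_div_iff₀ (by positivity)]
    have : (2:ℝ) ≤ (k:ℝ) := by exact_mod_cast hk
    linarith
  apply strictAntiOn_of_deriv_neg (convex_Icc _ _)
  · apply Continuous.continuousOn; fun_prop
  · intro x hx
    rw [interior_Icc] at hx
    rw [(hfun_deriv hk x).deriv]
    have hx1 : 1 < x := hx.1
    have hx2 : x < 2*k/((k:ℝ)+1) := hx.2
    have hxc : ((k:ℝ)+1)*x < 2*k := by
      rw [lt_div_iff₀ (by positivity)] at hx2
      linarith [hx2]
    have hp : 0 < x^(k-1) := by positivity
    nlinarith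

lemma hfun_mono (hk : 2 ≤ k) :
    StrictMonoOn (fun x:ℝ => x^(k+1) - 2*x^k + 1) (Set.Ici (2*k/((k:ℝ)+1))) := by
  have hc : (0:ℝ) < 2*k/((k:ℝ)+1) := by positivity
  apply strictMonoOn_of_deriv_pos (convex_Ici _)
  · apply Continuous.continuousOn; fun_prop
  · intro x hx
    rw [interior_Ici] at hx
    rw [(hfun_deriv hk x).deriv]
    have hx2 : 2*k/((k:ℝ)+1) < x := hx
    have hxc : 2*(k:ℝ) < ((k:ℝ)+1)*x := by
      rw [div_lt_iff₀ (by positivity)] at hx2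
      linarith [hx2]
    have hp : 0 < x^(k-1) := by
      have : (0:ℝ) < x := lt_trans hc hx2
      positivity
    nlinarith

lemma hfun_neg (hk : 2 ≤ k) (hα₁ : 2 * (1 - (2 : ℝ) ^ (-(k : ℤ))) < α)
    (hroot : α ^ k = ∑ i ∈ Finset.range k, α ^ i)
    {t : ℝ} (h1 : 1 < t) (h2 : t < α) : t^(k+1) - 2*t^k + 1 < 0 := by
  set c := 2*k/((k:ℝ)+1) with hc
  have hαc : c < α := alpha_gt_crit hk hα₁
  have hα0 : α ^ (k+1) - 2 * α ^ k + 1 = 0 := alpha_cubic hroot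
  have hc1 : (1:ℝ) ≤ c := by
    rw [hc, le_div_iff₀ (by positivity)]
    have : (2:ℝ) ≤ (k:ℝ) := by exact_mod_cast hk
    linarith
  rcases le_or_gt t c with h | h
  · have hm := hfun_anti hk (Set.left_mem_Icc.2 hc1) ⟨le_of_lt h1, h⟩ h1
    have hm' : t ^ (k+1) - 2*t^k + 1 < (1:ℝ) ^ (k+1) - 2*(1:ℝ)^k + 1 := hm
    simp at hm'
    linarith
  · have hm := hfun_mono hk (le_of_lt h) (le_of_lt hαc) h2
    have hm' : t ^ (k+1) - 2*t^k + 1 < α ^ (k+1) - 2*α^k + 1 := hm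
    linarith

lemma hfun_pos (hk : 2 ≤ k) (hα₁ : 2 * (1 - (2 : ℝ) ^ (-(k : ℤ))) < α)
    (hroot : α ^ k = ∑ i ∈ Finset.range k, α ^ i)
    {t : ℝ} (h2 : α < t) : 0 < t^(k+1) - 2*t^k + 1 := by
  have hαc : 2*k/((k:ℝ)+1) < α := alpha_gt_crit hk hα₁
  have hα0 : α ^ (k+1) - 2 * α ^ k + 1 = 0 := alpha_cubic hroot
  have hm := hfun_mono hk (le_of_lt hαc) (le_of_lt (lt_trans hαc h2)) h2
  have hm' : α ^ (k+1) - 2*α^k + 1 < t ^ (k+1) - 2*t^k + 1 := hm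
  linarith
end

noncomputable def Complex.abs : AbsoluteValue ℂ ℝ := NormedField.toAbsoluteValue ℂ

lemma Complex.abs_apply' (z : ℂ) : Complex.abs z = ‖z‖ := rfl

lemma Complex.sq_abs (z : ℂ) : Complex.abs z ^ 2 = Complex.normSq z := Complex.sq_norm z

@[simp]
lemma Complex.abs_natCast (n : ℕ) : Complex.abs n = n := Complex.norm_natCast n

@[simp]
lemma Complex.abs_ofNat (n : ℕ) [n.AtLeastTwo] : Complex.abs (ofNat(n) : ℂ) = (ofNat(n) : ℝ) :=
  Complex.norm_ofNat n

lemma Complex.abs_ofReal (r : ℝ) : Complex.abs r = |r| := by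
  rw [Complex.abs_apply', Complex.norm_real, Real.norm_eq_abs]

section
variable {k : ℕ} {α : ℝ}

lemma beta_small (hk : 2 ≤ k) (hα₁ : 2 * (1 - (2 : ℝ) ^ (-(k : ℤ))) < α)
    (hroot : α ^ k = ∑ i ∈ Finset.range k, α ^ i)
    {β : ℂ} (hβ : β^(k+1) - 2*β^k + 1 = 0) (hβ1 : β ≠ 1) (hβα : β ≠ (α:ℂ)) :
    Complex.abs β < 1 := by
  set t := Complex.abs β with ht
  by_contra hcon
  push_neg at hcon
  have ht1 : 1 ≤ t := hcon
  have hmul : β^k * (2 - β) = 1 := by linear_combination -hβ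
  have htk : t^k * Complex.abs (2 - β) = 1 := by
    have := congrArg Complex.abs hmul
    simpa [map_mul, map_pow] using this
  -- β^k = geometric sum
  have hΨβ : β^k = ∑ i ∈ Finset.range k, β^i := by
    have hg := geom_sum_mul β k
    have hzero : (β^k - ∑ i ∈ Finset.range k, β^i) * (β - 1) = 0 := by
      linear_combination hβ - hg
    rcases mul_eq_zero.1 hzero with h | h
    · exact sub_eq_zero.1 h
    · exact absurd (sub_eq_zero.1 h) hβ1
  have htle : t^k ≤ ∑ i ∈ Finset.range k, t^i := by
    calc t^k = Complex.abs (β^k) := by rw [map_pow]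
    _ = Complex.abs (∑ i ∈ Finset.range k, β^i) := by rw [hΨβ]
    _ ≤ ∑ i ∈ Finset.range k, Complex.abs (β^i) := Complex.abs.sum_le _ _
    _ = ∑ i ∈ Finset.range k, t^i := by simp [map_pow, ht]
  have htα : t ≤ α := by
    by_contra hc2
    push_neg at hc2
    have hp := hfun_pos hk hα₁ hroot hc2
    have key : 0 ≤ (∑ i ∈ Finset.range k, t^i - t^k) * (t - 1) :=
      mul_nonneg (by linarith) (by linarith)
    have expand : (∑ i ∈ Finset.range k, t^i - t^k) * (t-1)
        = -(t^(k+1) - 2*t^k + 1) := by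
      linear_combination geom_sum_mul t k
    linarith
  have habs2 : 2 - t ≤ Complex.abs (2 - β) := by
    have h := Complex.abs.le_sub 2 β
    simpa using h
  have hfge : 0 ≤ t^(k+1) - 2*t^k + 1 := by
    have htkpos : (0:ℝ) ≤ t^k := by positivity
    have h2 : t^k*(2 - t) ≤ 1 := by
      calc t^k*(2-t) ≤ t^k * Complex.abs (2-β) :=
        mul_le_mul_of_nonneg_left habs2 htkpos
      _ = 1 := htk
    linarith [pow_succ t k, h2]
  -- t = 1 or t = α
  have hre : β.re^2 + β.im^2 = t^2 := by
    rw [ht, Complex.sq_abs, Complex.normSq_apply]; ring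
  have hre2 : (2 - β.re)^2 + β.im^2 = (Complex.abs (2 - β))^2 := by
    rw [Complex.sq_abs, Complex.normSq_apply]
    simp [Complex.sub_re, Complex.sub_im]
    ring
  have hcases : t = 1 ∨ t = α := by
    rcases eq_or_lt_of_le ht1 with h1 | h1
    · exact Or.inl h1.symm
    rcases eq_or_lt_of_le htα with h2 | h2
    · exact Or.inr h2
    exact absurd (hfun_neg hk hα₁ hroot h1 h2) (by linarith)
  rcases hcases with hta1 | hta
  · -- t = 1 : abs (2-β) = 1
    rw [hta1] at htk hre
    have he : Complex.abs (2 - β) = 1 := by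
      rw [one_pow] at htk; linarith
    rw [he] at hre2
    have hβre : β.re = 1 := by linear_combination (hre - hre2) / 4
    have him2 : β.im^2 = 0 := by linear_combination hre - (1 + β.re) * hβre
    have hβim : β.im = 0 := sq_eq_zero_iff.1 him2
    exact hβ1 (Complex.ext (by simpa using hβre) (by simpa using hβim))
  · -- t = α
    have hα0 : α ^ (k+1) - 2 * α ^ k + 1 = 0 := alpha_cubic hroot
    have hαpos : (0:ℝ) < α := by nlinarith [alpha_gt32 hk hα₁]
    have hαk : (0:ℝ) < α^k := by positivity
    have hαmul : α^k * (2 - α) = 1 := by linear_combination -hα0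
    have he : Complex.abs (2 - β) = 2 - α := by
      rw [hta] at htk
      have h1 : α^k * (Complex.abs (2-β) - (2-α)) = 0 := by
        linear_combination htk - hαmul
      have h2 := (mul_eq_zero.1 h1).resolve_left (ne_of_gt hαk)
      linarith [sub_eq_zero.1 h2]
    rw [he] at hre2
    rw [hta] at hre
    have hβre : β.re = α := by linear_combination (hre - hre2) / 4
    have him2 : β.im^2 = 0 := by linear_combination hre - (α + β.re) * hβre
    have hβim : β.im = 0 := by
      have := sq_eq_zero_iff.1 him2
      exact this
    exact hβα (Complex.ext (by simpa using hβre) (by simpa using hβim))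
end

section
open Polynomial
variable {k : ℕ} {α : ℝ}

noncomputable def Pcube (k : ℕ) : ℚ[X] := X^(k+1) + (-(C 2 * X^k) + 1)

lemma Pcube_monic (hk : 2 ≤ k) : (Pcube k).Monic := by
  apply monic_X_pow_add
  have h1 : (-(C (2:ℚ) * X^k) + 1 : ℚ[X]).degree ≤ k := by
    apply le_trans (degree_add_le _ _)
    simp only [degree_neg]
    apply max_le
    · apply le_trans (degree_mul_le _ _)
      simp [degree_C, degree_X_pow]
    · exact le_trans degree_one_le (by exact_mod_cast Nat.zero_le k)
  refine lt_of_le_of_lt h1 ?_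
  exact_mod_cast Nat.lt_succ_self k

lemma Pcube_aeval (x : ℝ) : Polynomial.aeval x (Pcube k) = x^(k+1) - 2*x^k + 1 := by
  simp [Pcube]; ring

lemma Pcube_aeval_c (x : ℂ) : Polynomial.aeval x (Pcube k) = x^(k+1) - 2*x^k + 1 := by
  simp [Pcube]; ring

noncomputable def PcubeZ (k : ℕ) : Polynomial ℤ := X^(k+1) + (-(C 2 * X^k) + 1)

lemma PcubeZ_monic (hk : 2 ≤ k) : (PcubeZ k).Monic := by
  apply monic_X_pow_add
  have h1 : (-(C (2:ℤ) * X^k) + 1 : Polynomial ℤ).degree ≤ k := by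
    apply le_trans (degree_add_le _ _)
    simp only [degree_neg]
    apply max_le
    · calc degree (C (2:ℤ) * X^k) ≤ degree (C (2:ℤ)) + degree (X^k : Polynomial ℤ) :=
            degree_mul_le _ _
      _ ≤ 0 + (k:ℕ) := add_le_add degree_C_le (by simp [degree_X_pow])
      _ ≤ (k:ℕ) := by simp
    · exact le_trans degree_one_le (by exact_mod_cast Nat.zero_le k)
  refine lt_of_le_of_lt h1 ?_
  exact_mod_cast Nat.lt_succ_self k

lemma exists_conjugate (hk : 2 ≤ k) (hα32 : (3:ℝ)/2 < α) (hα₂ : α < 2)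
    (hcube : α^(k+1) - 2*α^k + 1 = 0) :
    ∃ β : ℂ, β ≠ (α:ℂ) ∧ β ≠ 1 ∧
      (∀ R : ℚ[X], Polynomial.aeval α R = 0 → Polynomial.aeval β R = 0) := by
  have hint : IsIntegral ℚ α :=
    ⟨Pcube k, Pcube_monic hk, by rw [← Polynomial.aeval_def, Pcube_aeval, hcube]⟩
  have hirr := minpoly.irreducible hint
  set μ := minpoly ℚ α with hμ
  have hdeg2 : 2 ≤ μ.natDegree := by
    rw [hμ, minpoly.two_le_natDegree_iff hint]
    rintro ⟨q, hq⟩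
    have hq' : (q:ℝ) = α := hq
    have hq0 : q^(k+1) - 2*q^k + 1 = 0 := by
      have : ((q^(k+1) - 2*q^k + 1 : ℚ) : ℝ) = 0 := by
        push_cast [hq']
        exact hcube
      exact_mod_cast this
    have hqint : IsIntegral ℤ q := by
      refine ⟨PcubeZ k, PcubeZ_monic hk, ?_⟩
      rw [← Polynomial.aeval_def]
      have : Polynomial.aeval q (PcubeZ k) = q^(k+1) - 2*q^k + 1 := by
        simp [PcubeZ, map_ofNat]; ring
      rw [this, hq0]
    obtain ⟨z, hz⟩ := IsIntegrallyClosed.isIntegral_iff.1 hqint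
    have hzq : (z:ℚ) = q := by exact_mod_cast hz
    have hz' : ((z:ℚ):ℝ) = α := by rw [hzq]; exact hq'
    have hz1 : (1:ℝ) < (z:ℝ) := by push_cast at hz' ⊢; linarith
    have hz2 : ((z:ℝ)) < 2 := by push_cast at hz' ⊢; linarith
    have : (1:ℤ) < z := by exact_mod_cast hz1
    have : (z:ℤ) < 2 := by exact_mod_cast hz2
    omega
  -- roots in ℂ
  have hsep : μ.Separable := hirr.separable
  have hsplits := IsAlgClosed.splits (μ.map (algebraMap ℚ ℂ))
  have hcard : Fintype.card (μ.rootSet ℂ) = μ.natDegree :=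
    card_rootSet_eq_natDegree hsep hsplits
  have hαroot : (α:ℂ) ∈ μ.rootSet ℂ := by
    rw [Polynomial.mem_rootSet]
    refine ⟨minpoly.ne_zero hint, ?_⟩
    have h0 : Polynomial.aeval α μ = 0 := minpoly.aeval ℚ α
    have := Polynomial.aeval_algebraMap_apply ℂ α μ
    rw [h0] at this
    simpa using this
  have hcard2 : 1 < Fintype.card (μ.rootSet ℂ) := by omega
  obtain ⟨⟨β, hβroot⟩, hβne⟩ := Fintype.exists_ne_of_one_lt_card hcard2 ⟨(α:ℂ), hαroot⟩
  have hβμ : Polynomial.aeval β μ = 0 := (Polynomial.mem_rootSet.1 hβroot).2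
  have hβα : β ≠ (α:ℂ) := fun h => hβne (Subtype.ext h)
  have hdvd : ∀ R : ℚ[X], Polynomial.aeval α R = 0 → Polynomial.aeval β R = 0 := by
    intro R hR
    obtain ⟨s, hs⟩ := minpoly.dvd ℚ α hR
    rw [hs, map_mul, hβμ, zero_mul]
  refine ⟨β, hβα, ?_, hdvd⟩
  -- β ≠ 1
  intro hβ1
  have h1root : Polynomial.aeval (1:ℚ) μ = 0 := by
    have : Polynomial.aeval (1:ℂ) μ = 0 := hβ1 ▸ hβμ
    have h2 := Polynomial.aeval_algebraMap_apply ℂ (1:ℚ) μ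
    simp only [map_one] at h2
    rw [this] at h2
    exact_mod_cast (by simpa using h2.symm : ((Polynomial.aeval (1:ℚ) μ : ℚ) : ℂ) = 0)
  have hXdvd : (X - C (1:ℚ)) ∣ μ := Polynomial.dvd_iff_isRoot.2 (by
    simpa [Polynomial.IsRoot, Polynomial.eval_sub] using h1root)
  obtain ⟨s, hs⟩ := hXdvd
  rcases hirr.isUnit_or_isUnit hs with hu | hu
  · exact Polynomial.not_isUnit_X_sub_C _ hu
  · have hsdeg : s.natDegree = 0 := Polynomial.natDegree_eq_zero_of_isUnit hu
    have : μ.natDegree = 1 := by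
      rw [hs, Polynomial.natDegree_mul (Polynomial.X_sub_C_ne_zero 1)
        (fun h => by simp [h] at hu)]
      rw [Polynomial.natDegree_X_sub_C, hsdeg]
    omega
end

set_option maxHeartbeats 1600000 in
open Polynomial in
theorem Lambda2_nonzero
    (k n m l d a : ℕ) (hk : 2 ≤ k) (hnm : m ≤ n) (hml : l ≤ m)
    (hd : 2 ≤ d) (ha1 : 1 ≤ a) (ha9 : a ≤ 9)
    (heq : lucasK k n * lucasK k m * lucasK k l = a * ((10 ^ d - 1) / 9))
    (hn : 25 < n)
    (α : ℝ) (hroot : α ^ k = ∑ i ∈ Finset.range k, α ^ i)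
    (hα₁ : 2 * (1 - (2 : ℝ) ^ (-(k : ℤ))) < α) (hα₂ : α < 2) :
    ((a : ℝ) / 9) * 10 ^ d ≠
      ((α - 1) / (2 + ((k : ℝ) + 1) * (α - 2))) ^ 2 * (2 * α - 1) ^ 2 *
        α ^ ((n : ℤ) + m - 2) * (lucasK k l : ℝ) := by
  intro hEq
  have hα32 : (3:ℝ)/2 < α := alpha_gt32 hk hα₁
  have hcube : α^(k+1) - 2*α^k + 1 = 0 := alpha_cubic hroot
  obtain ⟨hd5, hlt⟩ := key_nat k n m l d a hk hnm hml ha1 ha9 hd heq hn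
  set N : ℕ := n + m - 2 with hN
  have hNcast : (n : ℤ) + m - 2 = (N : ℤ) := by omega
  rw [hNcast, zpow_natCast] at hEq
  have hcrit : 2 * k / ((k:ℝ) + 1) < α := alpha_gt_crit hk hα₁
  have hkpos : (0:ℝ) < (k:ℝ) + 1 := by positivity
  have hDpos : 0 < 2 + ((k : ℝ) + 1) * (α - 2) := by
    rw [div_lt_iff₀ hkpos] at hcrit
    nlinarith
  have hDne : (2 + ((k : ℝ) + 1) * (α - 2)) ≠ 0 := ne_of_gt hDpos
  have hpoly : 9*(lucasK k l : ℝ)*((α-1)^2*(2*α-1)^2*α^N)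
      = (a:ℝ)*10^d*(((k:ℝ)+1)*α - 2*(k:ℝ))^2 := by
    field_simp at hEq
    linear_combination -hEq
  -- polynomial over ℚ
  set Q : ℚ[X] := C (9*(lucasK k l : ℚ)) * ((X - 1)^2 * (2*X - 1)^2 * X^N)
      - C ((a:ℚ)*10^d) * (C ((k:ℚ)+1)*X - C (2*(k:ℚ)))^2 with hQ
  have hQα : Polynomial.aeval α Q = 0 := by
    simp only [hQ, map_sub, map_mul, map_pow, Polynomial.aeval_C, Polynomial.aeval_X,
      map_add, map_one, map_ofNat]
    push_cast
    linear_combination hpoly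
  obtain ⟨β, hβα, hβ1, hconj⟩ := exists_conjugate hk hα32 hα₂ hcube
  have hβcube : β^(k+1) - 2*β^k + 1 = 0 := by
    have h := hconj (Pcube k) (by rw [Pcube_aeval, hcube])
    rwa [Pcube_aeval_c] at h
  have habs : Complex.abs β < 1 := beta_small hk hα₁ hroot hβcube hβ1 hβα
  have hQβ := hconj Q hQα
  have hC : 9*((lucasK k l : ℂ))*((β-1)^2*(2*β-1)^2*β^N)
      = (a:ℂ)*10^d*(((k:ℂ)+1)*β - 2*(k:ℂ))^2 := by
    simp only [hQ, map_sub, map_mul, map_pow, Polynomial.aeval_C, Polynomial.aeval_X,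
      map_add, map_one, map_ofNat] at hQβ
    push_cast at hQβ
    linear_combination hQβ
  -- absolute values
  set t := Complex.abs β with ht
  have ht0 : 0 ≤ t := Complex.abs.nonneg β
  have hb1 : Complex.abs (β - 1) ≤ 2 := by
    calc Complex.abs (β - 1) ≤ Complex.abs β + Complex.abs 1 := by
          rw [sub_eq_add_neg]
          simpa using Complex.abs.add_le β (-1)
    _ ≤ 2 := by rw [map_one]; linarith
  have hb2 : Complex.abs (2*β - 1) ≤ 3 := by
    calc Complex.abs (2*β - 1) ≤ Complex.abs (2*β) + Complex.abs 1 := by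
          rw [sub_eq_add_neg]
          simpa using Complex.abs.add_le (2*β) (-1)
    _ ≤ 3 := by
        rw [map_one, map_mul]
        simp only [Complex.abs_ofNat]
        linarith
  have hbN : Complex.abs (β^N) ≤ 1 := by
    rw [map_pow]
    exact pow_le_one₀ ht0 (le_of_lt habs)
  have hLl1 : (1:ℝ) ≤ (lucasK k l : ℝ) := by
    exact_mod_cast lucasK_pos k hk l
  have hLHS : Complex.abs (9*((lucasK k l : ℂ))*((β-1)^2*(2*β-1)^2*β^N))
      ≤ 324 * (lucasK k l : ℝ) := by
    have he : Complex.abs (9*((lucasK k l : ℂ))*((β-1)^2*(2*β-1)^2*β^N))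
        = 9 * (lucasK k l : ℝ) *
          (Complex.abs (β-1)^2 * Complex.abs (2*β-1)^2 * Complex.abs β ^ N) := by
      simp only [map_mul, map_pow, Complex.abs_natCast, Complex.abs_ofNat]
    rw [he]
    have h1 : Complex.abs (β-1)^2 ≤ 4 := by
      have := pow_le_pow_left₀ (Complex.abs.nonneg (β-1)) hb1 2
      norm_num at this ⊢; linarith
    have h2 : Complex.abs (2*β-1)^2 ≤ 9 := by
      have := pow_le_pow_left₀ (Complex.abs.nonneg (2*β-1)) hb2 2
      norm_num at this ⊢; linarith
    have h3 : Complex.abs β ^ N ≤ 1 := pow_le_one₀ ht0 habs.le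
    have h4 : (0:ℝ) ≤ Complex.abs β ^ N := pow_nonneg ht0 _
    have hxy : Complex.abs (β-1)^2 * Complex.abs (2*β-1)^2 ≤ 36 := by
      nlinarith [sq_nonneg (Complex.abs (β-1)), sq_nonneg (Complex.abs (2*β-1))]
    have hxyz : Complex.abs (β-1)^2 * Complex.abs (2*β-1)^2 * Complex.abs β ^ N ≤ 36 := by
      calc Complex.abs (β-1)^2 * Complex.abs (2*β-1)^2 * Complex.abs β ^ N
          ≤ 36 * 1 := mul_le_mul hxy h3 h4 (by norm_num)
      _ = 36 := by norm_num
    have hprodnn : (0:ℝ) ≤ Complex.abs (β-1)^2 * Complex.abs (2*β-1)^2 * Complex.abs β ^ N := by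
      positivity
    nlinarith
  have hkR : (2:ℝ) ≤ (k:ℝ) := by exact_mod_cast hk
  have hRHS : (10:ℝ)^d ≤ Complex.abs ((a:ℂ)*10^d*(((k:ℂ)+1)*β - 2*(k:ℂ))^2) := by
    have he : Complex.abs ((a:ℂ)*10^d*(((k:ℂ)+1)*β - 2*(k:ℂ))^2)
        = (a:ℝ) * 10^d * Complex.abs (((k:ℂ)+1)*β - 2*(k:ℂ))^2 := by
      simp only [map_mul, map_pow, Complex.abs_natCast, Complex.abs_ofNat]
    rw [he]
    have hden : (k:ℝ) - 1 ≤ Complex.abs (((k:ℂ)+1)*β - 2*(k:ℂ)) := by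
      have h1 : Complex.abs (2*(k:ℂ)) - Complex.abs (((k:ℂ)+1)*β)
          ≤ Complex.abs (2*(k:ℂ) - ((k:ℂ)+1)*β) := Complex.abs.le_sub _ _
      have h2 : Complex.abs (2*(k:ℂ) - ((k:ℂ)+1)*β)
          = Complex.abs (((k:ℂ)+1)*β - 2*(k:ℂ)) := by
        exact Complex.abs.map_sub _ _
      have h3 : Complex.abs (2*(k:ℂ)) = 2*(k:ℝ) := by
        rw [map_mul]
        simp [Complex.abs_natCast]
      have h4 : Complex.abs (((k:ℂ)+1)*β) = ((k:ℝ)+1)*t := by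
        rw [map_mul]
        congr 1
        have hc : ((k:ℂ)+1) = (((k:ℝ)+1 : ℝ) : ℂ) := by push_cast; ring
        rw [hc, Complex.abs_ofReal, abs_of_pos hkpos]
      have h5 : ((k:ℝ)+1)*t ≤ (k:ℝ)+1 := by nlinarith
      rw [h2, h3, h4] at h1
      linarith
    have hd2 : 1 ≤ Complex.abs (((k:ℂ)+1)*β - 2*(k:ℂ))^2 := by
      nlinarith [Complex.abs.nonneg (((k:ℂ)+1)*β - 2*(k:ℂ))]
    have haR : (1:ℝ) ≤ (a:ℝ) := by exact_mod_cast ha1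
    have h10 : (0:ℝ) < 10^d := by positivity
    nlinarith [mul_le_mul haR hd2 zero_le_one (by linarith : (0:ℝ) ≤ (a:ℝ))]
  have hEqAbs := congrArg Complex.abs hC
  have hcast : 324 * (lucasK k l : ℝ) < 10^d := by
    have := hlt
    push_cast
    exact_mod_cast this
  rw [hEqAbs] at hLHS
  linarith
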